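/- arXiv:0805.2907 — 2 statements merged into one kernel-verified Lean document; each statement's English description precedes it below -/
import Mathlib

section
/- If H is a rational hyperplane with the two opposite regular faces ±F_H in H^⊥ and q ∈ DM(X∩H), then (P_{X\H}^{F_H} - P_{X\H}^{-F_H}) * q belongs to DM(X). -/
open Function

attribute [local instance] Classical.propDecidable

noncomputable section

/-- The lattice `Γ = ι → ℤ`. -/
abbrev ZLat (ι : Type*) := ι → ℤ
/-- The ambient real vector space `V = Γ ⊗ ℝ = ι → ℝ`. -/
abbrev Amb (ι : Type*) := ι → ℝ

variable {ι : Type*} [Fintype ι]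

/-- Embedding of the lattice into the ambient space. -/
def castV (γ : ZLat ι) : Amb ι := fun i => (γ i : ℝ)

/-- Standard pairing on `V`. -/
def dotR (u v : Amb ι) : ℝ := ∑ i, u i * v i

/-- The difference operator `∇ₐ`. -/
def nab (a : ZLat ι) (f : ZLat ι → ℤ) : ZLat ι → ℤ := fun b => f b - f (b - a)

/-- `∇_Y = ∏_{a ∈ Y} ∇ₐ` for a list `Y`. -/
def nabL (Y : List (ZLat ι)) (f : ZLat ι → ℤ) : ZLat ι → ℤ := Y.foldr nab f

/-- Delta function at `0`. -/
def delta0 : ZLat ι → ℤ := fun γ => if γ = 0 then 1 else 0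

/-- The partition function of a list `Y`: the number of ways of writing `γ` as a
nonnegative integral combination of the entries of `Y`. -/
def partFn (Y : List (ZLat ι)) : ZLat ι → ℤ :=
  fun γ => Nat.card {k : Fin Y.length → ℕ // ∑ i, (k i : ℤ) • Y.get i = γ}

/-- The cone `C(Y)` of nonnegative real combinations of the entries of `Y`. -/
def coneC (Y : List (ZLat ι)) : Set (Amb ι) :=
  {v | ∃ t : Fin Y.length → ℝ, (∀ i, 0 ≤ t i) ∧ v = ∑ i, t i • castV (Y.get i)}

/-- `C(Y)` is pointed: it contains no line. -/
def PointedList (Y : List (ZLat ι)) : Prop :=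
  ∀ v ∈ coneC Y, -v ∈ coneC Y → v = 0

/-- The zonotope `B(Y) = {∑ tᵢ aᵢ : 0 ≤ tᵢ ≤ 1}`. -/
def zono (Y : List (ZLat ι)) : Set (Amb ι) :=
  {v | ∃ t : Fin Y.length → ℝ, (∀ i, 0 ≤ t i ∧ t i ≤ 1) ∧ v = ∑ i, t i • castV (Y.get i)}

/-- The real span of a list of lattice vectors. -/
def spanOf (Y : List (ZLat ι)) : Submodule ℝ (Amb ι) :=
  Submodule.span ℝ (castV '' {a | a ∈ Y})

/-- A subspace is rational (relative to `X`) if it is spanned by a sublist of `X`. -/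
def IsRational (X : List (ZLat ι)) (r : Submodule ℝ (Amb ι)) : Prop :=
  ∃ Y : List (ZLat ι), (∀ a ∈ Y, a ∈ X) ∧ r = spanOf Y

/-- The sublist `X ∩ r`. -/
def inSub (X : List (ZLat ι)) (r : Submodule ℝ (Amb ι)) : List (ZLat ι) :=
  X.filter (fun a => decide (castV a ∈ r))

/-- The sublist `X \ r`. -/
def outSub (X : List (ZLat ι)) (r : Submodule ℝ (Amb ι)) : List (ZLat ι) :=
  X.filter (fun a => decide (castV a ∉ r))

/-- The operator `∇_{X \ r}`. -/
def nabOut (X : List (ZLat ι)) (r : Submodule ℝ (Amb ι)) (f : ZLat ι → ℤ) : ZLat ι → ℤ :=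
  nabL (outSub X r) f

/-- The space `𝓕(X)`: `∇_{X\r} f` is supported on `Γ ∩ r` for every rational `r`. -/
def memF (X : List (ZLat ι)) (f : ZLat ι → ℤ) : Prop :=
  ∀ r, IsRational X r → support (nabOut X r f) ⊆ {γ | castV γ ∈ r}

/-- The Dahmen–Micchelli space of a list `Y` (inside its span): `f` is killed by
`∇_{Y \ H}` for every rational hyperplane `H` of the span of `Y`. -/
def memDM (Y : List (ZLat ι)) (f : ZLat ι → ℤ) : Prop :=
  ∀ H, IsRational Y H → Module.finrank ℝ H + 1 = Module.finrank ℝ (spanOf Y) →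
    nabOut Y H f = 0

/-- `𝓕(X ∩ r)`, viewed as functions on `Γ` supported on `Γ ∩ r`. -/
def memFrel (X : List (ZLat ι)) (r : Submodule ℝ (Amb ι)) (g : ZLat ι → ℤ) : Prop :=
  support g ⊆ {γ | castV γ ∈ r} ∧ memF (inSub X r) g

/-- `DM(X ∩ r)`, viewed as functions on `Γ` supported on `Γ ∩ r`. -/
def memDMrel (X : List (ZLat ι)) (r : Submodule ℝ (Amb ι)) (g : ZLat ι → ℤ) : Prop :=
  support g ⊆ {γ | castV γ ∈ r} ∧ memDM (inSub X r) g

/-- `u` is a regular vector for `X \ r`:  `u ∈ r^⊥` and `⟨u, a⟩ ≠ 0` for all `a ∈ X \ r`.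
It determines the regular face `F` containing it. -/
def Reg (X : List (ZLat ι)) (r : Submodule ℝ (Amb ι)) (u : Amb ι) : Prop :=
  (∀ v ∈ r, dotR u v = 0) ∧ ∀ a ∈ X, castV a ∉ r → dotR u (castV a) ≠ 0

/-- The sublist `B ⊆ X \ r` of elements negative on `u`. -/
def negPart (X : List (ZLat ι)) (r : Submodule ℝ (Amb ι)) (u : Amb ι) : List (ZLat ι) :=
  (outSub X r).filter (fun a => decide (dotR u (castV a) < 0))

/-- The list `[A, -B]`: entries of `X \ r`, with sign flipped on the part negative on `u`. -/
def signedOut (X : List (ZLat ι)) (r : Submodule ℝ (Amb ι)) (u : Amb ι) : List (ZLat ι) :=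
  (outSub X r).map (fun a => if 0 < dotR u (castV a) then a else -a)

/-- The special function `𝓟_{X\r}^F` for the face `F ∋ u`:
`(-1)^{|B|} τ_{-∑_{b∈B} b} (∏_{a∈A} ∑_k δ_{ka}) * (∏_{b∈B} ∑_k δ_{-kb})`. -/
def PF (X : List (ZLat ι)) (r : Submodule ℝ (Amb ι)) (u : Amb ι) : ZLat ι → ℤ :=
  fun γ => (-1) ^ (negPart X r u).length *
    partFn (signedOut X r u) (γ + (negPart X r u).sum)

/-- The support region `-∑_{b∈B} b + C(A, -B)` of `𝓟_{X\r}^F`, as a subset of `Γ`. -/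
def PFsupp (X : List (ZLat ι)) (r : Submodule ℝ (Amb ι)) (u : Amb ι) : Set (ZLat ι) :=
  {γ | castV (γ + (negPart X r u).sum) ∈ coneC (signedOut X r u)}

/-- Convolution of two functions on the lattice. -/
def conv (f g : ZLat ι → ℤ) : ZLat ι → ℤ := fun γ => ∑ᶠ μ, f (γ - μ) * g μ

/-- The union of all rational hyperplanes (inside the span of `Y`). -/
def hyperUnion (Y : List (ZLat ι)) : Set (Amb ι) :=
  {v | ∃ H, IsRational Y H ∧ Module.finrank ℝ H + 1 = Module.finrank ℝ (spanOf Y) ∧ v ∈ H}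

/-- A tope for `Y`: a connected component of the complement (in the span of `Y`) of the
union of the hyperplanes spanned by sublists of `Y`. -/
def IsTope (Y : List (ZLat ι)) (τ : Set (Amb ι)) : Prop :=
  ∃ v ∈ (spanOf Y : Set (Amb ι)) \ hyperUnion Y,
    τ = connectedComponentIn ((spanOf Y : Set (Amb ι)) \ hyperUnion Y) v

/-- The set of singular vectors: the union of the cones `C(Y)` over sublists `Y` of `X`
not spanning `V`. -/
def singSet (X : List (ZLat ι)) : Set (Amb ι) :=
  {v | ∃ Y : List (ZLat ι), (∀ a ∈ Y, a ∈ X) ∧ spanOf Y ≠ ⊤ ∧ v ∈ coneC Y}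

/-- A big cell: a connected component of the complement of the set of singular vectors. -/
def IsBigCell (X : List (ZLat ι)) (c : Set (Amb ι)) : Prop :=
  ∃ v ∈ (singSet X)ᶜ, c = connectedComponentIn (singSet X)ᶜ v

/-- Minkowski difference of sets, `A - B`. -/
def sdiffSet (A B : Set (Amb ι)) : Set (Amb ι) := {x | ∃ a ∈ A, ∃ b ∈ B, x = a - b}

/-! ### Auxiliary lemmas -/

section Aux

set_option linter.unusedSectionVars false

variable {ι : Type*} [Fintype ι]

/- ## Basic `nab` calculus -/

lemma nabL_cons (a : ZLat ι) (l : List (ZLat ι)) (f : ZLat ι → ℤ) :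
    nabL (a :: l) f = nab a (nabL l f) := rfl

lemma nabL_append (l₁ l₂ : List (ZLat ι)) (f : ZLat ι → ℤ) :
    nabL (l₁ ++ l₂) f = nabL l₁ (nabL l₂ f) := by
  simp [nabL, List.foldr_append]

lemma nab_comm (a b : ZLat ι) (f : ZLat ι → ℤ) : nab a (nab b f) = nab b (nab a f) := by
  funext γ
  simp only [nab]
  rw [sub_right_comm γ b a]
  ring

lemma nabL_perm {l₁ l₂ : List (ZLat ι)} (h : l₁.Perm l₂) (f : ZLat ι → ℤ) :
    nabL l₁ f = nabL l₂ f := by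
  induction h with
  | nil => rfl
  | cons a _ ih => rw [nabL_cons, nabL_cons, ih]
  | swap a b l => exact nab_comm _ _ _
  | trans _ _ ih₁ ih₂ => rw [ih₁, ih₂]

lemma nab_zero (a : ZLat ι) : nab a (0 : ZLat ι → ℤ) = 0 := by
  funext γ; simp [nab]

lemma nabL_zero (l : List (ZLat ι)) : nabL l (0 : ZLat ι → ℤ) = 0 := by
  induction l with
  | nil => rfl
  | cons a l ih => rw [nabL_cons, ih, nab_zero]

lemma nab_sub (a : ZLat ι) (f g : ZLat ι → ℤ) : nab a (f - g) = nab a f - nab a g := by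
  funext γ; simp only [nab, Pi.sub_apply]; ring

lemma nabL_sub (l : List (ZLat ι)) (f g : ZLat ι → ℤ) :
    nabL l (f - g) = nabL l f - nabL l g := by
  induction l with
  | nil => rfl
  | cons a l ih => rw [nabL_cons, ih, nab_sub]; rfl

lemma nab_mul_shift (a : ZLat ι) (c : ℤ) (s : ZLat ι) (f : ZLat ι → ℤ) :
    nab a (fun γ => c * f (γ + s)) = fun γ => c * (nab a f) (γ + s) := by
  funext γ
  simp only [nab]
  rw [sub_add_eq_add_sub]
  ring

lemma nabL_mul_shift (l : List (ZLat ι)) (c : ℤ) (s : ZLat ι) (f : ZLat ι → ℤ) :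
    nabL l (fun γ => c * f (γ + s)) = fun γ => c * (nabL l f) (γ + s) := by
  induction l with
  | nil => rfl
  | cons a l ih => rw [nabL_cons, ih, nab_mul_shift]; rfl

/- ## `castV` and `dotR` algebra -/

lemma castV_add (x y : ZLat ι) : castV (x + y) = castV x + castV y := by
  funext i; simp [castV]

lemma castV_sub (x y : ZLat ι) : castV (x - y) = castV x - castV y := by
  funext i; simp [castV]

lemma castV_neg (x : ZLat ι) : castV (-x : ZLat ι) = -castV x := by
  funext i; simp [castV]

lemma dotR_add_right (w x y : Amb ι) : dotR w (x + y) = dotR w x + dotR w y := by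
  simp [dotR, mul_add, Finset.sum_add_distrib]

lemma dotR_sub_right (w x y : Amb ι) : dotR w (x - y) = dotR w x - dotR w y := by
  simp [dotR, mul_sub, Finset.sum_sub_distrib]

lemma dotR_neg_left (w x : Amb ι) : dotR (-w) x = -dotR w x := by
  simp [dotR, Finset.sum_neg_distrib]

lemma dotR_neg_right (w x : Amb ι) : dotR w (-x) = -dotR w x := by
  simp [dotR, Finset.sum_neg_distrib]

lemma dotR_castV_sum {m : ℕ} (v : Amb ι) (Y : Fin m → ZLat ι) (k : Fin m → ℕ) :
    dotR v (castV (∑ i, (k i : ℤ) • Y i)) = ∑ i, (k i : ℝ) * dotR v (castV (Y i)) := by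
  simp only [dotR, castV, Finset.sum_apply, Pi.smul_apply, smul_eq_mul, Finset.mul_sum]
  push_cast
  rw [Finset.sum_comm]
  apply Finset.sum_congr rfl
  intro i _
  rw [Finset.mul_sum]
  apply Finset.sum_congr rfl
  intro j _
  ring

/- ## Sign and translation bookkeeping -/

lemma nabL_signed (u : Amb ι) (l : List (ZLat ι)) (hne : ∀ a ∈ l, dotR u (castV a) ≠ 0)
    (f : ZLat ι → ℤ) :
    nabL l f = fun γ => ((-1 : ℤ) ^ (l.filter (fun a => decide (dotR u (castV a) < 0))).length) *
      (nabL (l.map (fun a => if 0 < dotR u (castV a) then a else -a)) f)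
      (γ - (l.filter (fun a => decide (dotR u (castV a) < 0))).sum) := by
  induction l with
  | nil => funext γ; simp [nabL]
  | cons a l ih =>
    have hane := hne a (List.mem_cons_self)
    have hl : ∀ b ∈ l, dotR u (castV b) ≠ 0 := fun b hb => hne b (List.mem_cons_of_mem a hb)
    rw [nabL_cons, ih hl]
    rcases lt_or_gt_of_ne hane with hneg | hpos
    · rw [List.filter_cons_of_pos (by simpa using hneg), List.map_cons,
        if_neg (by linarith)]
      funext γ
      simp only [nab, nabL_cons, List.length_cons, List.sum_cons, pow_succ]
      have e2 : γ - (a + (List.filter (fun a => decide (dotR u (castV a) < 0)) l).sum) - -a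
          = γ - (List.filter (fun a => decide (dotR u (castV a) < 0)) l).sum := by abel
      have e1 : γ - (a + (List.filter (fun a => decide (dotR u (castV a) < 0)) l).sum)
          = γ - a - (List.filter (fun a => decide (dotR u (castV a) < 0)) l).sum := by abel
      rw [e2, e1]
      ring
    · rw [List.filter_cons_of_neg (by simp; linarith), List.map_cons, if_pos hpos]
      funext γ
      simp only [nab, nabL_cons]
      have e1 : γ - a - (List.filter (fun a => decide (dotR u (castV a) < 0)) l).sum
          = γ - (List.filter (fun a => decide (dotR u (castV a) < 0)) l).sum - a := by abel
      rw [e1]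
      ring

/- ## Partition function: finiteness and the difference equation -/

lemma key_bound {m : ℕ} (v : Amb ι) (Y : Fin m → ZLat ι)
    (hpos : ∀ i, 0 < dotR v (castV (Y i))) (c : ℝ) :
    {k : Fin m → ℕ | dotR v (castV (∑ i, (k i : ℤ) • Y i)) = c}.Finite := by
  rcases isEmpty_or_nonempty (Fin m) with hm | hm
  · exact Set.toFinite _
  · set δ := Finset.univ.inf' Finset.univ_nonempty (fun i => dotR v (castV (Y i))) with hδdef
    have hδ : 0 < δ := by
      rw [hδdef, Finset.lt_inf'_iff]
      exact fun i _ => hpos i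
    set N : ℕ := ⌈c / δ⌉₊ with hN
    apply Set.Finite.subset (Set.Finite.pi (fun _ : Fin m => Set.finite_Iic N))
    intro k hk
    simp only [Set.mem_setOf_eq] at hk
    rw [dotR_castV_sum] at hk
    simp only [Set.mem_pi, Set.mem_univ, Set.mem_Iic, forall_true_left]
    intro i
    have hterm : ∀ j : Fin m, 0 ≤ (k j : ℝ) * dotR v (castV (Y j)) :=
      fun j => mul_nonneg (Nat.cast_nonneg _) (le_of_lt (hpos j))
    have h1 : (k i : ℝ) * δ ≤ c := by
      calc (k i : ℝ) * δ ≤ (k i : ℝ) * dotR v (castV (Y i)) := by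
            apply mul_le_mul_of_nonneg_left _ (Nat.cast_nonneg _)
            exact Finset.inf'_le _ (Finset.mem_univ i)
        _ ≤ ∑ j, (k j : ℝ) * dotR v (castV (Y j)) :=
            Finset.single_le_sum (fun j _ => hterm j) (Finset.mem_univ i)
        _ = c := hk
    have h2 : (k i : ℝ) ≤ c / δ := (le_div_iff₀ hδ).mpr h1
    have h3 : (k i : ℝ) ≤ (N : ℝ) := h2.trans (Nat.le_ceil _)
    exact_mod_cast h3

lemma sol_finite {m : ℕ} (v : Amb ι) (Y : Fin m → ZLat ι)
    (hpos : ∀ i, 0 < dotR v (castV (Y i))) (γ : ZLat ι) :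
    Finite {k : Fin m → ℕ // ∑ i, (k i : ℤ) • Y i = γ} := by
  have h : {k : Fin m → ℕ | ∑ i, (k i : ℤ) • Y i = γ}.Finite := by
    apply (key_bound v Y hpos (dotR v (castV γ))).subset
    intro k hk
    simp only [Set.mem_setOf_eq] at hk ⊢
    rw [hk]
  exact h.to_subtype

lemma partFn_pos_finite (v : Amb ι) (S : List (ZLat ι))
    (hpos : ∀ b ∈ S, 0 < dotR v (castV b)) (γ : ZLat ι) :
    Finite {k : Fin S.length → ℕ // ∑ i, (k i : ℤ) • S.get i = γ} :=
  sol_finite v _ (fun i => hpos _ (List.get_mem S i)) γ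

lemma partFn_nil : partFn ([] : List (ZLat ι)) = delta0 := by
  funext γ
  unfold partFn delta0
  by_cases h : γ = 0
  · subst h
    haveI : Unique {k : Fin (List.length ([] : List (ZLat ι))) → ℕ //
        ∑ i, (k i : ℤ) • ([] : List (ZLat ι)).get i = 0} := by
      refine ⟨⟨⟨fun i => i.elim0, by simp⟩⟩, ?_⟩
      rintro ⟨k, hk⟩
      apply Subtype.ext
      funext i
      exact i.elim0
    simp [Nat.card_unique]
  · rw [if_neg h]
    haveI hie : IsEmpty {k : Fin (List.length ([] : List (ZLat ι))) → ℕ //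
        ∑ i, (k i : ℤ) • ([] : List (ZLat ι)).get i = γ} := by
      constructor
      rintro ⟨k, hk⟩
      apply h
      rw [← hk]
      simp
    exact_mod_cast Nat.card_of_isEmpty

lemma partFn_cons (v : Amb ι) (a : ZLat ι) (S : List (ZLat ι))
    (hpos : ∀ b ∈ a :: S, 0 < dotR v (castV b)) (γ : ZLat ι) :
    partFn (a :: S) γ = partFn (a :: S) (γ - a) + partFn S γ := by
  have hsum : ∀ k : Fin (S.length + 1) → ℕ, ∑ i, (k i : ℤ) • (a :: S).get i
      = (k 0 : ℤ) • a + ∑ i : Fin S.length, (k i.succ : ℤ) • S.get i := by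
    intro k
    rw [Fin.sum_univ_succ]
    rfl
  haveI hα : Finite {k : Fin (S.length + 1) → ℕ // ∑ i, (k i : ℤ) • (a :: S).get i = γ} :=
    partFn_pos_finite v _ hpos γ
  haveI hβ : Finite {k : Fin (S.length + 1) → ℕ //
      ∑ i, (k i : ℤ) • (a :: S).get i = γ - a} := partFn_pos_finite v _ hpos (γ - a)
  set α := {k : Fin (S.length + 1) → ℕ // ∑ i, (k i : ℤ) • (a :: S).get i = γ} with hαdef
  set p : α → Prop := fun k => k.1 0 = 0 with hp
  have e₁ : {k : α // p k} ≃ {k' : Fin S.length → ℕ // ∑ i, (k' i : ℤ) • S.get i = γ} := by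
    refine ⟨fun kk => ⟨fun i => kk.1.1 i.succ, ?_⟩,
      fun k' => ⟨⟨Fin.cons 0 k'.1, ?_⟩, ?_⟩, ?_, ?_⟩
    · have h2 := kk.1.2
      rw [hsum] at h2
      have h0 : kk.1.1 0 = 0 := kk.2
      rw [h0] at h2
      simpa using h2
    · rw [hsum]
      simp only [Fin.cons_zero, Fin.cons_succ]
      simpa using k'.2
    · simp [hp, Fin.cons_zero]
    · rintro ⟨⟨k, hk⟩, h0⟩
      apply Subtype.ext
      apply Subtype.ext
      funext i
      refine Fin.cases ?_ ?_ i
      · simp only [Fin.cons_zero]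
        exact h0.symm
      · intro j
        simp [Fin.cons_succ]
    · rintro ⟨k', hk'⟩
      apply Subtype.ext
      funext i
      simp [Fin.cons_succ]
  have e₂ : {k : α // ¬ p k} ≃ {k : Fin (S.length + 1) → ℕ //
      ∑ i, (k i : ℤ) • (a :: S).get i = γ - a} := by
    refine ⟨fun kk => ⟨Function.update kk.1.1 0 (kk.1.1 0 - 1), ?_⟩,
      fun kk => ⟨⟨Function.update kk.1 0 (kk.1 0 + 1), ?_⟩, ?_⟩, ?_, ?_⟩
    · have h2 := kk.1.2
      rw [hsum] at h2
      rw [hsum]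
      have hne' : kk.1.1 0 ≠ 0 := kk.2
      have h1 : (1 : ℕ) ≤ kk.1.1 0 := Nat.one_le_iff_ne_zero.mpr hne'
      rw [Function.update_self]
      have hrw : ∑ i : Fin S.length,
          ((Function.update kk.1.1 0 (kk.1.1 0 - 1) i.succ : ℕ) : ℤ) • S.get i
          = ∑ i : Fin S.length, (kk.1.1 i.succ : ℤ) • S.get i := by
        apply Finset.sum_congr rfl
        intro i _
        rw [Function.update_of_ne (Fin.succ_ne_zero i) _ _]
      rw [hrw]
      have hcast : ((kk.1.1 0 - 1 : ℕ) : ℤ) = (kk.1.1 0 : ℤ) - 1 := by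
        exact_mod_cast Nat.cast_sub (R := ℤ) h1
      rw [hcast, sub_smul, one_smul]
      have hab : ((kk.1.1 0 : ℤ)) • a - a + ∑ i : Fin S.length, (kk.1.1 i.succ : ℤ) • S.get i
          = ((kk.1.1 0 : ℤ) • a + ∑ i : Fin S.length, (kk.1.1 i.succ : ℤ) • S.get i) - a := by
        abel
      rw [hab, h2]
    · have h2 := kk.2
      rw [hsum] at h2
      rw [hsum]
      rw [Function.update_self]
      have hrw : ∑ i : Fin S.length,
          ((Function.update kk.1 0 (kk.1 0 + 1) i.succ : ℕ) : ℤ) • S.get i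
          = ∑ i : Fin S.length, (kk.1 i.succ : ℤ) • S.get i := by
        apply Finset.sum_congr rfl
        intro i _
        rw [Function.update_of_ne (Fin.succ_ne_zero i) _ _]
      rw [hrw]
      have h3 : (kk.1 0 : ℤ) • a + (∑ i : Fin S.length, (kk.1 i.succ : ℤ) • S.get i) + a = γ :=
        eq_sub_iff_add_eq.mp h2
      push_cast
      rw [add_smul, one_smul]
      have hab : ((kk.1 0 : ℤ)) • a + a + ∑ i : Fin S.length, (kk.1 i.succ : ℤ) • S.get i
          = ((kk.1 0 : ℤ) • a + ∑ i : Fin S.length, (kk.1 i.succ : ℤ) • S.get i) + a := by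
        abel
      rw [hab, h3]
    · simp [hp, Function.update_self]
    · rintro ⟨⟨k, hk⟩, h0⟩
      have h1 : (1 : ℕ) ≤ k 0 := Nat.one_le_iff_ne_zero.mpr h0
      apply Subtype.ext
      apply Subtype.ext
      show Function.update (Function.update k 0 (k 0 - 1)) 0
          (Function.update k 0 (k 0 - 1) 0 + 1) = k
      rw [Function.update_self, Function.update_idem, Nat.sub_add_cancel h1,
        Function.update_eq_self]
    · rintro ⟨k, hk⟩
      apply Subtype.ext
      show Function.update (Function.update k 0 (k 0 + 1)) 0
          (Function.update k 0 (k 0 + 1) 0 - 1) = k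
      rw [Function.update_self, Function.update_idem, Nat.add_sub_cancel,
        Function.update_eq_self]
  have hcard : Nat.card α = Nat.card {k : α // p k} + Nat.card {k : α // ¬ p k} := by
    rw [← Nat.card_sum]
    exact (Nat.card_congr (Equiv.sumCompl p)).symm
  have hL : partFn (a :: S) γ = (Nat.card α : ℤ) := rfl
  have hR1 : partFn (a :: S) (γ - a) = (Nat.card {k : Fin (S.length + 1) → ℕ //
      ∑ i, (k i : ℤ) • (a :: S).get i = γ - a} : ℤ) := rfl
  have hR2 : partFn S γ
      = (Nat.card {k' : Fin S.length → ℕ // ∑ i, (k' i : ℤ) • S.get i = γ} : ℤ) := rfl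
  rw [hL, hR1, hR2, hcard, Nat.card_congr e₁, Nat.card_congr e₂]
  push_cast
  ring

lemma nabL_partFn (v : Amb ι) : ∀ (S : List (ZLat ι)), (∀ b ∈ S, 0 < dotR v (castV b)) →
    nabL S (partFn S) = delta0
  | [], _ => partFn_nil
  | a :: S, h => by
    have hperm : nabL (a :: S) (partFn (a :: S)) = nabL S (nab a (partFn (a :: S))) := by
      rw [nabL_perm (List.perm_append_singleton a S).symm, nabL_append]
      rfl
    rw [hperm]
    have hstep : nab a (partFn (a :: S)) = partFn S := by
      funext γ
      show partFn (a :: S) γ - partFn (a :: S) (γ - a) = partFn S γ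
      rw [partFn_cons v a S h γ]
      ring
    rw [hstep]
    exact nabL_partFn v S (fun b hb => h b (List.mem_cons_of_mem a hb))

/- ## `∇_{X\H} 𝓟 = δ₀` -/

lemma signedOut_pos (X : List (ZLat ι)) (H : Submodule ℝ (Amb ι)) (u : Amb ι)
    (hu : Reg X H u) : ∀ b ∈ signedOut X H u, 0 < dotR u (castV b) := by
  intro b hb
  rw [signedOut, List.mem_map] at hb
  obtain ⟨a, ha, rfl⟩ := hb
  rw [outSub, List.mem_filter] at ha
  have hne : dotR u (castV a) ≠ 0 := hu.2 a ha.1 (of_decide_eq_true ha.2)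
  rcases lt_or_gt_of_ne hne with hneg | hpos
  · rw [if_neg (by linarith), castV_neg, dotR_neg_right]
    linarith
  · rw [if_pos hpos]
    exact hpos

lemma outSub_ne (X : List (ZLat ι)) (H : Submodule ℝ (Amb ι)) (u : Amb ι)
    (hu : Reg X H u) : ∀ a ∈ outSub X H, dotR u (castV a) ≠ 0 := by
  intro a ha
  rw [outSub, List.mem_filter] at ha
  exact hu.2 a ha.1 (of_decide_eq_true ha.2)

lemma nabOut_PF (X : List (ZLat ι)) (H : Submodule ℝ (Amb ι)) (u : Amb ι)
    (hu : Reg X H u) : nabOut X H (PF X H u) = delta0 := by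
  have hne := outSub_ne X H u hu
  have hpos := signedOut_pos X H u hu
  show nabL (outSub X H) (PF X H u) = delta0
  have hPF : PF X H u = fun γ => ((-1 : ℤ) ^ (_root_.negPart X H u).length) *
      partFn (signedOut X H u) (γ + (_root_.negPart X H u).sum) := rfl
  rw [hPF, nabL_mul_shift, nabL_signed u _ hne]
  funext γ
  rw [show (List.filter (fun a => decide (dotR u (castV a) < 0)) (outSub X H))
    = _root_.negPart X H u from rfl]
  rw [show List.map (fun a => if 0 < dotR u (castV a) then a else -a) (outSub X H)
    = signedOut X H u from rfl]
  show (-1 : ℤ) ^ (_root_.negPart X H u).length * ((-1 : ℤ) ^ (_root_.negPart X H u).length *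
      nabL (signedOut X H u) (partFn (signedOut X H u))
        (γ + (_root_.negPart X H u).sum - (_root_.negPart X H u).sum)) = delta0 γ
  rw [add_sub_cancel_right, nabL_partFn u _ hpos, ← mul_assoc, ← pow_add,
    Even.neg_one_pow ⟨_, rfl⟩, one_mul]

/- ## Slice finiteness -/

def WSlice (w : Amb ι) (f : ZLat ι → ℤ) : Prop :=
  ∀ c : ℝ, {γ : ZLat ι | f γ ≠ 0 ∧ dotR w (castV γ) = c}.Finite

def WFlat (w : Amb ι) (g : ZLat ι → ℤ) : Prop :=
  ∀ γ, g γ ≠ 0 → dotR w (castV γ) = 0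

lemma WSlice_neg {w : Amb ι} {f : ZLat ι → ℤ} (h : WSlice w f) : WSlice (-w) f := by
  intro c
  have hset : {γ : ZLat ι | f γ ≠ 0 ∧ dotR (-w) (castV γ) = c}
      = {γ : ZLat ι | f γ ≠ 0 ∧ dotR w (castV γ) = -c} := by
    ext γ
    simp only [Set.mem_setOf_eq, dotR_neg_left, neg_eq_iff_eq_neg]
  rw [hset]
  exact h (-c)

lemma WSlice_nab {w : Amb ι} {f : ZLat ι → ℤ} (a : ZLat ι) (h : WSlice w f) :
    WSlice w (nab a f) := by
  intro c
  apply Set.Finite.subset ((h c).union ((h (c - dotR w (castV a))).image (· + a)))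
  rintro γ ⟨hγ, hc⟩
  by_cases h1 : f γ ≠ 0
  · exact Or.inl ⟨h1, hc⟩
  · push_neg at h1
    have h2 : f (γ - a) ≠ 0 := by
      intro h2
      apply hγ
      show f γ - f (γ - a) = 0
      rw [h1, h2, sub_zero]
    refine Or.inr ⟨γ - a, ⟨h2, ?_⟩, by simp⟩
    rw [castV_sub, dotR_sub_right, hc]

lemma WSlice_nabL {w : Amb ι} {f : ZLat ι → ℤ} (l : List (ZLat ι)) (h : WSlice w f) :
    WSlice w (nabL l f) := by
  induction l with
  | nil => exact h
  | cons a l ih => rw [nabL_cons]; exact WSlice_nab a ih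

lemma WSlice_partFn (v : Amb ι) (S : List (ZLat ι))
    (hpos : ∀ b ∈ S, 0 < dotR v (castV b)) : WSlice v (partFn S) := by
  intro c
  have hb := key_bound v (fun i : Fin S.length => S.get i)
    (fun i => hpos _ (List.get_mem S i)) c
  apply Set.Finite.subset (hb.image (fun k => ∑ i, (k i : ℤ) • S.get i))
  rintro γ ⟨hγ, hc⟩
  have hne : Nonempty {k : Fin S.length → ℕ // ∑ i, (k i : ℤ) • S.get i = γ} := by
    by_contra hcon
    apply hγ
    haveI : IsEmpty {k : Fin S.length → ℕ // ∑ i, (k i : ℤ) • S.get i = γ} :=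
      not_nonempty_iff.mp hcon
    have h0 : Nat.card {k : Fin S.length → ℕ // ∑ i, (k i : ℤ) • S.get i = γ} = 0 :=
      Nat.card_of_isEmpty
    show (Nat.card {k : Fin S.length → ℕ // ∑ i, (k i : ℤ) • S.get i = γ} : ℤ) = 0
    rw [h0]
    rfl
  obtain ⟨k, hk⟩ := hne
  exact ⟨k, by rw [Set.mem_setOf_eq, hk, hc], hk⟩

lemma WSlice_PF (X : List (ZLat ι)) (H : Submodule ℝ (Amb ι)) (u : Amb ι)
    (hu : Reg X H u) : WSlice u (PF X H u) := by
  intro c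
  have h := WSlice_partFn u (signedOut X H u) (signedOut_pos X H u hu)
    (c + dotR u (castV (negPart X H u).sum))
  apply Set.Finite.subset (h.image (fun δ => δ - (negPart X H u).sum))
  rintro γ ⟨hγ, hc⟩
  refine ⟨γ + (negPart X H u).sum, ⟨?_, ?_⟩, by
    show γ + (_root_.negPart X H u).sum - (_root_.negPart X H u).sum = γ
    rw [add_sub_cancel_right]⟩
  · intro h0
    apply hγ
    show ((-1 : ℤ) ^ (negPart X H u).length) *
      partFn (signedOut X H u) (γ + (negPart X H u).sum) = 0
    rw [h0, mul_zero]
  · rw [castV_add, dotR_add_right, hc]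

/- ## Convolution calculus -/

lemma conv_supp_finite {w : Amb ι} {f g : ZLat ι → ℤ} (hf : WSlice w f) (hg : WFlat w g)
    (γ : ZLat ι) : (support fun μ => f (γ - μ) * g μ).Finite := by
  apply Set.Finite.subset ((hf (dotR w (castV γ))).image (fun δ => γ - δ))
  intro μ hμ
  rw [mem_support] at hμ
  have h1 : f (γ - μ) ≠ 0 := left_ne_zero_of_mul hμ
  have h2 : g μ ≠ 0 := right_ne_zero_of_mul hμ
  refine ⟨γ - μ, ⟨h1, ?_⟩, by
    show γ - (γ - μ) = μ
    rw [sub_sub_cancel]⟩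
  rw [castV_sub, dotR_sub_right, hg μ h2, sub_zero]

lemma conv_zero (f : ZLat ι → ℤ) : conv f 0 = 0 := by
  funext γ
  show ∑ᶠ μ, f (γ - μ) * (0 : ZLat ι → ℤ) μ = 0
  simp

lemma nab_conv_left {w : Amb ι} {f g : ZLat ι → ℤ} (hf : WSlice w f) (hg : WFlat w g)
    (a : ZLat ι) : nab a (conv f g) = conv (nab a f) g := by
  funext γ
  have h1 : conv (nab a f) g γ = ∑ᶠ μ, (f (γ - μ) * g μ - f (γ - a - μ) * g μ) := by
    rw [conv]
    apply finsum_congr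
    intro μ
    show (f (γ - μ) - f (γ - μ - a)) * g μ = _
    rw [sub_right_comm γ μ a]
    ring
  rw [h1, finsum_sub_distrib (conv_supp_finite hf hg γ) (conv_supp_finite hf hg (γ - a))]
  rfl

lemma nab_conv_right {w : Amb ι} {f g : ZLat ι → ℤ} (hf : WSlice w f) (hg : WFlat w g)
    (a : ZLat ι) : nab a (conv f g) = conv f (nab a g) := by
  funext γ
  have hfin2 : (support fun μ => f (γ - μ) * g (μ - a)).Finite := by
    apply Set.Finite.subset ((conv_supp_finite hf hg (γ - a)).image (· + a))
    intro μ hμ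
    rw [mem_support] at hμ
    refine ⟨μ - a, ?_, by
      show μ - a + a = μ
      abel⟩
    rw [mem_support]
    have : γ - a - (μ - a) = γ - μ := by abel
    rw [this]
    exact hμ
  have h1 : conv f (nab a g) γ = ∑ᶠ μ, (f (γ - μ) * g μ - f (γ - μ) * g (μ - a)) := by
    rw [conv]
    apply finsum_congr
    intro μ
    show f (γ - μ) * (g μ - g (μ - a)) = _
    ring
  have h2 : ∑ᶠ μ, f (γ - μ) * g (μ - a) = conv f g (γ - a) := by
    rw [conv, ← finsum_comp_equiv (Equiv.addRight a)]
    apply finsum_congr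
    intro ν
    show f (γ - (ν + a)) * g (ν + a - a) = f (γ - a - ν) * g ν
    rw [add_sub_cancel_right, sub_add_eq_sub_sub, sub_right_comm]
  rw [h1, finsum_sub_distrib (conv_supp_finite hf hg γ) hfin2, h2]
  rfl

lemma WFlat_nab {w : Amb ι} {g : ZLat ι → ℤ} (a : ZLat ι) (ha : dotR w (castV a) = 0)
    (hg : WFlat w g) : WFlat w (nab a g) := by
  intro γ hγ
  by_cases h1 : g γ ≠ 0
  · exact hg γ h1
  · push_neg at h1
    have h2 : g (γ - a) ≠ 0 := by
      intro h2
      apply hγ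
      show g γ - g (γ - a) = 0
      rw [h1, h2, sub_zero]
    have := hg _ h2
    rw [castV_sub, dotR_sub_right, ha, sub_zero] at this
    exact this

lemma WFlat_nabL {w : Amb ι} {g : ZLat ι → ℤ} (l : List (ZLat ι))
    (hl : ∀ a ∈ l, dotR w (castV a) = 0) (hg : WFlat w g) : WFlat w (nabL l g) := by
  induction l with
  | nil => exact hg
  | cons a l ih =>
    rw [nabL_cons]
    exact WFlat_nab a (hl a (List.mem_cons_self))
      (ih (fun b hb => hl b (List.mem_cons_of_mem a hb)))

lemma nabL_conv_left {w : Amb ι} {f g : ZLat ι → ℤ} (hf : WSlice w f) (hg : WFlat w g)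
    (l : List (ZLat ι)) : nabL l (conv f g) = conv (nabL l f) g := by
  induction l with
  | nil => rfl
  | cons a l ih =>
    rw [nabL_cons, ih, nab_conv_left (WSlice_nabL l hf) hg, nabL_cons]

lemma nabL_conv_right {w : Amb ι} {f g : ZLat ι → ℤ} (hf : WSlice w f) (hg : WFlat w g)
    (l : List (ZLat ι)) (hl : ∀ a ∈ l, dotR w (castV a) = 0) :
    nabL l (conv f g) = conv f (nabL l g) := by
  induction l with
  | nil => rfl
  | cons a l ih =>
    have hl' : ∀ b ∈ l, dotR w (castV b) = 0 := fun b hb => hl b (List.mem_cons_of_mem a hb)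
    rw [nabL_cons, ih hl',
      nab_conv_right hf (WFlat_nabL l hl' hg) a, nabL_cons]

/- ## Span and rationality helpers -/

lemma mem_inSub {X : List (ZLat ι)} {r : Submodule ℝ (Amb ι)} {a : ZLat ι} :
    a ∈ inSub X r ↔ a ∈ X ∧ castV a ∈ r := by
  simp [inSub, List.mem_filter]

lemma spanOf_le {M : List (ZLat ι)} {r : Submodule ℝ (Amb ι)}
    (h : ∀ a ∈ M, castV a ∈ r) : spanOf M ≤ r := by
  rw [spanOf, Submodule.span_le]
  rintro v ⟨a, ha, rfl⟩
  exact h a ha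

lemma spanOf_mono {M M' : List (ZLat ι)} (h : ∀ a ∈ M, a ∈ M') : spanOf M ≤ spanOf M' := by
  apply Submodule.span_mono
  apply Set.image_mono
  intro a ha
  exact h a ha

lemma mem_spanOf {M : List (ZLat ι)} {a : ZLat ι} (h : a ∈ M) : castV a ∈ spanOf M :=
  Submodule.subset_span ⟨a, h, rfl⟩

lemma spanOf_inSub (X : List (ZLat ι)) (H : Submodule ℝ (Amb ι)) (hH : IsRational X H) :
    spanOf (inSub X H) = H := by
  obtain ⟨Y, hY, rfl⟩ := hH
  apply le_antisymm
  · exact spanOf_le (fun a ha => (mem_inSub.mp ha).2)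
  · exact spanOf_mono (fun a ha => mem_inSub.mpr ⟨hY a ha, mem_spanOf ha⟩)

lemma spanOf_cons (a : ZLat ι) (M : List (ZLat ι)) :
    spanOf (a :: M) = (ℝ ∙ castV a) ⊔ spanOf M := by
  rw [spanOf, spanOf]
  have himg : castV '' {x | x ∈ a :: M} = insert (castV a) (castV '' {x | x ∈ M}) := by
    rw [show {x : ZLat ι | x ∈ a :: M} = insert a {x | x ∈ M} from
      Set.ext (fun x => List.mem_cons)]
    exact Set.image_insert_eq
  rw [himg, Submodule.span_insert]

lemma finrank_spanOf_cons_le (a : ZLat ι) (M : List (ZLat ι)) :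
    Module.finrank ℝ (spanOf (a :: M)) ≤ Module.finrank ℝ (spanOf M) + 1 := by
  rw [spanOf_cons]
  have h1 : Module.finrank ℝ (ℝ ∙ castV a : Submodule ℝ (Amb ι)) ≤ 1 := by
    by_cases h : castV a = 0
    · rw [h, Submodule.span_zero_singleton]
      simp
    · rw [finrank_span_singleton h]
  calc Module.finrank ℝ ((ℝ ∙ castV a) ⊔ spanOf M : Submodule ℝ (Amb ι))
      ≤ Module.finrank ℝ (ℝ ∙ castV a : Submodule ℝ (Amb ι))
        + Module.finrank ℝ (spanOf M) :=
        Submodule.finrank_add_le_finrank_add_finrank _ _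
    _ ≤ Module.finrank ℝ (spanOf M) + 1 := by omega

lemma exists_hyper (A : List (ZLat ι)) (H : Submodule ℝ (Amb ι))
    (hA : ∀ a ∈ A, castV a ∈ H) (hspanA : spanOf A = H) :
    ∀ (d : ℕ) (M : List (ZLat ι)), (∀ a ∈ M, a ∈ A) → spanOf M ≠ H →
      Module.finrank ℝ H ≤ Module.finrank ℝ (spanOf M) + d →
      ∃ L, IsRational A L ∧ spanOf M ≤ L ∧ Module.finrank ℝ L + 1 = Module.finrank ℝ H := by
  intro d
  induction d with
  | zero =>
    intro M hM hne hle
    exfalso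
    have hMleH : spanOf M ≤ H := spanOf_le (fun a ha => hA a (hM a ha))
    have := Submodule.finrank_lt_finrank_of_lt (lt_of_le_of_ne hMleH hne)
    omega
  | succ d ih =>
    intro M hM hne hle
    by_cases hd : Module.finrank ℝ (spanOf M) + 1 = Module.finrank ℝ H
    · exact ⟨spanOf M, ⟨M, hM, rfl⟩, le_rfl, hd⟩
    · have hMleH : spanOf M ≤ H := spanOf_le (fun a ha => hA a (hM a ha))
      have hlt0 := Submodule.finrank_lt_finrank_of_lt (lt_of_le_of_ne hMleH hne)
      obtain ⟨a, haA, haM⟩ : ∃ a, a ∈ A ∧ castV a ∉ spanOf M := by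
        by_contra hc
        push_neg at hc
        have : H ≤ spanOf M := by
          rw [← hspanA]
          exact spanOf_le hc
        exact absurd (le_antisymm hMleH this) hne
      have hsub : spanOf M ≤ spanOf (a :: M) :=
        spanOf_mono (fun x hx => List.mem_cons_of_mem a hx)
      have hmem : castV a ∈ spanOf (a :: M) := mem_spanOf (List.mem_cons_self)
      have hlt : Module.finrank ℝ (spanOf M) < Module.finrank ℝ (spanOf (a :: M)) :=
        Submodule.finrank_lt_finrank_of_lt
          (lt_of_le_of_ne hsub (fun h => haM (h ▸ hmem)))
      have hcons := finrank_spanOf_cons_le a M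
      have hne' : spanOf (a :: M) ≠ H := by
        intro h
        rw [h] at hcons
        omega
      obtain ⟨L, h1, h2, h3⟩ := ih (a :: M)
        (by
          intro x hx
          rcases List.mem_cons.mp hx with rfl | hx'
          · exact haA
          · exact hM x hx')
        hne' (by omega)
      exact ⟨L, h1, le_trans hsub h2, h3⟩

end Aux

/-- If `H` is a rational hyperplane with opposite regular faces `±F_H ∋ ±w` in `H^⊥` and
`q ∈ DM(X∩H)`, then `(𝓟_{X\H}^{F_H} - 𝓟_{X\H}^{-F_H}) * q ∈ DM(X)`. -/
theorem wall_jump_DM {ι : Type*} [Fintype ι] (X : List (ZLat ι))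
    (hX0 : ∀ a ∈ X, a ≠ 0) (hspan : spanOf X = ⊤)
    (H : Submodule ℝ (Amb ι)) (hH : IsRational X H)
    (hHhyp : Module.finrank ℝ H + 1 = Module.finrank ℝ (Amb ι))
    (w : Amb ι) (hw : Reg X H w)
    (q : ZLat ι → ℤ) (hq : memDMrel X H q) :
    memDM X (fun γ => conv (PF X H w) q γ - conv (PF X H (-w)) q γ) := by
  intro K hK hKrank
  rw [hspan, finrank_top] at hKrank
  have hq1 : WFlat w q := fun γ h => hw.1 _ (hq.1 (mem_support.mpr h))
  have hwneg : Reg X H (-w) := by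
    constructor
    · intro v hv
      rw [dotR_neg_left, hw.1 v hv, neg_zero]
    · intro a ha h'
      rw [dotR_neg_left]
      intro hc
      exact hw.2 a ha h' (neg_eq_zero.mp hc)
  have hf₁ : WSlice w (PF X H w) := WSlice_PF X H w hw
  have hf₂ : WSlice w (PF X H (-w)) := by
    have h2 := WSlice_neg (WSlice_PF X H (-w) hwneg)
    rwa [neg_neg] at h2
  have hφ : (fun γ => conv (PF X H w) q γ - conv (PF X H (-w)) q γ)
      = conv (PF X H w) q - conv (PF X H (-w)) q := rfl
  rw [hφ]
  by_cases hKH : K = H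
  · subst hKH
    show nabL (outSub X K) _ = 0
    rw [nabL_sub, nabL_conv_left hf₁ hq1, nabL_conv_left hf₂ hq1,
      show nabL (outSub X K) (PF X K w) = nabOut X K (PF X K w) from rfl,
      show nabL (outSub X K) (PF X K (-w)) = nabOut X K (PF X K (-w)) from rfl,
      nabOut_PF X K w hw, nabOut_PF X K (-w) hwneg, sub_self]
  · have hfinH : Module.finrank ℝ K = Module.finrank ℝ H := by omega
    have hAmem : ∀ a ∈ inSub X H, castV a ∈ H := fun a ha => (mem_inSub.mp ha).2
    have hspanA : spanOf (inSub X H) = H := spanOf_inSub X H hH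
    have hM₀A : ∀ a ∈ inSub (inSub X H) K, a ∈ inSub X H :=
      fun a ha => (mem_inSub.mp ha).1
    have hM₀ne : spanOf (inSub (inSub X H) K) ≠ H := by
      intro h
      apply hKH
      have hHK : H ≤ K := by
        rw [← h]
        exact spanOf_le (fun a ha => (mem_inSub.mp ha).2)
      exact (Submodule.eq_of_le_of_finrank_le hHK (le_of_eq hfinH)).symm
    obtain ⟨L, hLrat, hLge, hLrank⟩ := exists_hyper (inSub X H) H hAmem hspanA
      (Module.finrank ℝ H) (inSub (inSub X H) K) hM₀A hM₀ne (Nat.le_add_left _ _)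
    have hcontain : ∀ a ∈ inSub X H, castV a ∈ K → castV a ∈ L :=
      fun a ha hk => hLge (mem_spanOf (mem_inSub.mpr ⟨ha, hk⟩))
    have hqL : nabOut (inSub X H) L q = 0 := hq.2 L hLrat (by rw [hspanA]; exact hLrank)
    have hlB0 : ∀ a ∈ (outSub X K).filter (fun a => !(decide (castV a ∉ H))),
        dotR w (castV a) = 0 := by
      intro a ha
      rw [List.mem_filter] at ha
      have h2 := ha.2
      simp only [Bool.not_eq_true', decide_eq_false_iff_not, not_not] at h2
      exact hw.1 _ h2
    have hlBq : nabL ((outSub X K).filter (fun a => !(decide (castV a ∉ H)))) q = 0 := by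
      have e1 : (outSub X K).filter (fun a => !(decide (castV a ∉ H)))
          = outSub (inSub X H) K := by
        simp only [outSub, inSub, List.filter_filter]
        apply List.filter_congr
        intro a _
        by_cases h1 : castV a ∈ H <;> by_cases h2 : castV a ∈ K <;> simp [h1, h2]
      rw [e1]
      have hsplit2 : nabL (outSub (inSub X H) K) q
          = nabL ((outSub (inSub X H) K).filter (fun a => !(decide (castV a ∉ L))))
            (nabL ((outSub (inSub X H) K).filter (fun a => !!(decide (castV a ∉ L)))) q) := by
        rw [← nabL_append]
        exact (nabL_perm (List.filter_append_perm _ _) _).symm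
      have e3 : (outSub (inSub X H) K).filter (fun a => !!(decide (castV a ∉ L)))
          = outSub (inSub X H) L := by
        simp only [outSub, List.filter_filter]
        apply List.filter_congr
        intro a ha
        by_cases h1 : castV a ∈ L
        · simp [h1]
        · have h2 : castV a ∉ K := fun hk => h1 (hcontain a ha hk)
          simp [h1, h2]
      rw [hsplit2, e3, show nabL (outSub (inSub X H) L) q = nabOut (inSub X H) L q from rfl,
        hqL, nabL_zero]
    have hsplit : nabOut X K (conv (PF X H w) q - conv (PF X H (-w)) q)
        = nabL ((outSub X K).filter (fun a => decide (castV a ∉ H)))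
          (nabL ((outSub X K).filter (fun a => !(decide (castV a ∉ H))))
            (conv (PF X H w) q - conv (PF X H (-w)) q)) := by
      rw [← nabL_append]
      exact (nabL_perm (List.filter_append_perm _ _) _).symm
    rw [hsplit, nabL_sub, nabL_conv_right hf₁ hq1 _ hlB0, nabL_conv_right hf₂ hq1 _ hlB0,
      hlBq, conv_zero, conv_zero, sub_self, nabL_zero]
end
end

section
/- Given a big cell c, if τ₁, …, τ_k are all the topes contained in c, then c - B(X) = ⋃_{i=1}^k (τ_i - B(X)). -/
open Function

attribute [local instance] Classical.propDecidable

noncomputable section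

variable {ι : Type*} [Fintype ι]

set_option linter.unusedSectionVars false

-- L1 : finiteness of rational subspaces
lemma ratFinite (X : List (ZLat ι)) : {H : Submodule ℝ (Amb ι) | IsRational X H}.Finite := by
  have hfin : (castV '' {a | a ∈ X} : Set (Amb ι)).Finite := (X.finite_toSet).image _
  refine Set.Finite.subset ((hfin.finite_subsets).image (fun S => Submodule.span ℝ S)) ?_
  rintro H ⟨Y, hY, rfl⟩
  exact ⟨castV '' {a | a ∈ Y}, Set.image_mono (fun a ha => hY a ha), rfl⟩

-- L2 : cone inside span
lemma cone_subset_span (Y : List (ZLat ι)) : coneC Y ⊆ (spanOf Y : Set (Amb ι)) := by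
  rintro u ⟨t, ht, rfl⟩
  refine Submodule.sum_mem _ (fun i _ => Submodule.smul_mem _ _ ?_)
  exact Submodule.subset_span ⟨Y.get i, Y.get_mem i, rfl⟩

-- L3 : zonotope convex
lemma zono_convex (Y : List (ZLat ι)) : Convex ℝ (zono Y) := by
  rintro u ⟨t, ht, rfl⟩ w ⟨s, hs, rfl⟩ a b ha hb hab
  refine ⟨fun i => a * t i + b * s i, fun i => ?_, ?_⟩
  · constructor
    · have := (ht i).1; have := (hs i).1; positivity
    · calc a * t i + b * s i ≤ a * 1 + b * 1 := by
            gcongr; exacts [(ht i).2, (hs i).2]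
        _ = 1 := by linarith
  · rw [Finset.smul_sum, Finset.smul_sum, ← Finset.sum_add_distrib]
    refine Finset.sum_congr rfl (fun i _ => ?_)
    rw [add_smul, mul_smul, mul_smul]

-- linear map onto the zonotope
def zmapL (X : List (ZLat ι)) : (Fin X.length → ℝ) →ₗ[ℝ] Amb ι where
  toFun t := ∑ i, t i • castV (X.get i)
  map_add' s t := by
    simp only [Pi.add_apply, add_smul, Finset.sum_add_distrib]
  map_smul' c t := by
    simp only [Pi.smul_apply, smul_eq_mul, mul_smul, RingHom.id_apply, Finset.smul_sum]

lemma zmapL_surj (X : List (ZLat ι)) (hspan : spanOf X = ⊤) :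
    Surjective (zmapL X) := by
  rw [← LinearMap.range_eq_top, ← top_le_iff, ← hspan, spanOf, Submodule.span_le]
  rintro _ ⟨a, ha, rfl⟩
  obtain ⟨i, rfl⟩ := List.mem_iff_get.mp ha
  refine ⟨Pi.single i 1, ?_⟩
  simp [zmapL, Pi.single_apply, ite_smul]

-- L4 : interior point of the zonotope
lemma zono_interior (X : List (ZLat ι)) (hspan : spanOf X = ⊤) :
    ∃ b₀ ρ, 0 < ρ ∧ Metric.ball b₀ ρ ⊆ zono X := by
  set f := LinearMap.toContinuousLinearMap (zmapL X)
  have hopen : IsOpenMap f := f.isOpenMap (zmapL_surj X hspan)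
  set U : Set (Fin X.length → ℝ) := Set.pi Set.univ (fun _ => Set.Ioo (0:ℝ) 1)
  have hU : IsOpen U := isOpen_set_pi Set.finite_univ (fun _ _ => isOpen_Ioo)
  have hmem : (fun _ => (1:ℝ)/2) ∈ U := fun i _ => by norm_num
  have h2 : IsOpen (f '' U) := hopen U hU
  obtain ⟨ρ, hρ, hball⟩ := Metric.isOpen_iff.mp h2 (f (fun _ => (1:ℝ)/2))
    ⟨_, hmem, rfl⟩
  refine ⟨f fun _ => (1:ℝ)/2, ρ, hρ, fun v hv => ?_⟩
  obtain ⟨t, ht, rfl⟩ := hball hv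
  exact ⟨t, fun i => ⟨(ht i (Set.mem_univ i)).1.le, (ht i (Set.mem_univ i)).2.le⟩, rfl⟩

lemma dense_avoid (ℱ : Set (Submodule ℝ (Amb ι))) (hfin : ℱ.Finite) :
    (∀ H ∈ ℱ, H ≠ ⊤) → Dense (⋂ H ∈ ℱ, ((H : Set (Amb ι))ᶜ)) := by
  refine @Set.Finite.induction_on (Submodule ℝ (Amb ι))
    (fun s _ => (∀ H ∈ s, H ≠ ⊤) → Dense (⋂ H ∈ s, ((H : Set (Amb ι))ᶜ))) ℱ hfin
    (fun _ => by simpa using dense_univ) ?_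
  intro H s hH hs ih hne
  · rw [Set.biInter_insert]
    have hdH : Dense ((H : Set (Amb ι))ᶜ) := by
      rw [← interior_eq_empty_iff_dense_compl]
      by_contra h
      exact hne H (Set.mem_insert _ _)
        (Submodule.eq_top_of_nonempty_interior' H (Set.nonempty_iff_ne_empty.2 h))
    have hoH : IsOpen ((H : Set (Amb ι))ᶜ) :=
      (Submodule.closed_of_finiteDimensional H).isOpen_compl
    exact hdH.inter_of_isOpen_left (ih (fun K hK => hne K (Set.mem_insert_of_mem _ hK))) hoH

-- L5 : avoid finitely many proper subspaces inside a ball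
lemma avoid (ℱ : Set (Submodule ℝ (Amb ι))) (hfin : ℱ.Finite)
    (hne : ∀ H ∈ ℱ, H ≠ ⊤) (z : Amb ι) (ρ : ℝ) (hρ : 0 < ρ) :
    ∃ v ∈ Metric.ball z ρ, ∀ H ∈ ℱ, v ∉ H := by
  have hdense := dense_avoid ℱ hfin hne
  obtain ⟨v, hv, hvb⟩ := hdense.exists_mem_open Metric.isOpen_ball ⟨z, Metric.mem_ball_self hρ⟩
  exact ⟨v, hvb, fun H hH hmem => (Set.mem_iInter₂.mp hv H hH) hmem⟩

-- extension of a proper rational subspace to a rational hyperplane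
lemma extend_aux (X : List (ZLat ι)) (hspan : spanOf X = ⊤) :
    ∀ n (r : Submodule ℝ (Amb ι)), IsRational X r →
      Module.finrank ℝ (Amb ι) = Module.finrank ℝ r + n → 1 ≤ n →
      ∃ H, IsRational X H ∧ Module.finrank ℝ H + 1 = Module.finrank ℝ (Amb ι) ∧ r ≤ H := by
  intro n
  induction n with
  | zero => intro r _ _ h; omega
  | succ n ih =>
    intro r hr hrk _
    by_cases hn : n = 0
    · exact ⟨r, hr, by omega, le_rfl⟩
    · have hex : ∃ a ∈ X, castV a ∉ r := by
        by_contra h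
        push_neg at h
        have h1 : spanOf X ≤ r := by
          rw [spanOf, Submodule.span_le]
          rintro _ ⟨a, ha, rfl⟩
          exact h a ha
        rw [hspan, top_le_iff] at h1
        rw [h1, finrank_top] at hrk
        omega
      obtain ⟨a, haX, har⟩ := hex
      obtain ⟨Y, hY, rfl⟩ := hr
      have hset : castV '' {b | b ∈ a :: Y} =
          insert (castV a) (castV '' {b | b ∈ Y}) := by
        have hbs : {b | b ∈ a :: Y} = insert a {b | b ∈ Y} := by
          ext b; simp [List.mem_cons]
        rw [hbs, Set.image_insert_eq]
      have hle : spanOf Y ≤ spanOf (a :: Y) := by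
        apply Submodule.span_mono
        rw [hset]
        exact Set.subset_insert _ _
      have hmem' : castV a ∈ spanOf (a :: Y) :=
        Submodule.subset_span (by rw [hset]; exact Set.mem_insert _ _)
      have hlt : spanOf Y < spanOf (a :: Y) :=
        lt_of_le_of_ne hle (fun h => har (h ▸ hmem'))
      have hup : Module.finrank ℝ (spanOf (a :: Y)) ≤ Module.finrank ℝ (spanOf Y) + 1 := by
        have h0 : castV a ≠ 0 := fun h => har (h ▸ (spanOf Y).zero_mem)
        have : spanOf (a :: Y) = Submodule.span ℝ {castV a} ⊔ spanOf Y := by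
          rw [spanOf, hset, Submodule.span_insert]; rfl
        rw [this]
        calc Module.finrank ℝ (Submodule.span ℝ {castV a} ⊔ spanOf Y : Submodule ℝ (Amb ι))
            ≤ Module.finrank ℝ (Submodule.span ℝ {castV a}) + Module.finrank ℝ (spanOf Y) :=
              Submodule.finrank_add_le_finrank_add_finrank _ _
          _ = Module.finrank ℝ (spanOf Y) + 1 := by
              rw [finrank_span_singleton h0]; omega
      have hdn : Module.finrank ℝ (spanOf Y) < Module.finrank ℝ (spanOf (a :: Y)) :=
        Submodule.finrank_lt_finrank_of_lt hlt
      have heq : Module.finrank ℝ (spanOf (a :: Y)) = Module.finrank ℝ (spanOf Y) + 1 := by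
        omega
      obtain ⟨H, h1, h2, h3⟩ := ih (spanOf (a :: Y))
        ⟨a :: Y, fun b hb => by
          rcases List.mem_cons.mp hb with h | h
          · exact h ▸ haX
          · exact hY b h, rfl⟩
        (by omega) (by omega)
      exact ⟨H, h1, h2, hle.trans h3⟩

lemma sing_subset_hyper (X : List (ZLat ι)) (hspan : spanOf X = ⊤) :
    singSet X ⊆ hyperUnion X := by
  rintro u ⟨Y, hY, hne, hu⟩
  have hrat : IsRational X (spanOf Y) := ⟨Y, hY, rfl⟩
  have hlt : Module.finrank ℝ (spanOf Y) < Module.finrank ℝ (Amb ι) :=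
    Submodule.finrank_lt hne
  obtain ⟨H, h1, h2, h3⟩ := extend_aux X hspan
    (Module.finrank ℝ (Amb ι) - Module.finrank ℝ (spanOf Y)) (spanOf Y) hrat
    (by omega) (by omega)
  exact ⟨H, h1, by rw [hspan, finrank_top]; exact h2, h3 (cone_subset_span Y hu)⟩

/-- If `τ₁, …, τ_k` are all the topes contained in a big cell `𝔠`, then
`𝔠 - B(X) = ⋃ᵢ (τᵢ - B(X))`. -/
theorem bigcell_cover {ι : Type*} [Fintype ι] (X : List (ZLat ι))
    (hX0 : ∀ a ∈ X, a ≠ 0) (hspan : spanOf X = ⊤)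
    (c : Set (Amb ι)) (hc : IsBigCell X c)
    (k : ℕ) (τ : Fin k → Set (Amb ι))
    (hτ : ∀ i, IsTope X (τ i) ∧ τ i ⊆ c)
    (hall : ∀ τ' : Set (Amb ι), IsTope X τ' → τ' ⊆ c → ∃ i, τ' = τ i) :
    sdiffSet c (zono X) = ⋃ i, sdiffSet (τ i) (zono X) := by
  classical
  obtain ⟨v₀, hv₀, rfl⟩ := hc
  apply Set.Subset.antisymm
  · rintro p ⟨x, hx, b, hb, rfl⟩
    set F := (singSet X)ᶜ with hF
    have hxF : x ∈ F := connectedComponentIn_subset _ _ hx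
    obtain ⟨b₀, ρ, hρ, hball⟩ := zono_interior X hspan
    set ℱ : Set (Submodule ℝ (Amb ι)) := {H | IsRational X H ∧ H ≠ ⊤} with hℱ
    have hfinℱ : ℱ.Finite := (ratFinite X).subset (fun H hH => hH.1)
    obtain ⟨v, hvball, hv⟩ := avoid ℱ hfinℱ (fun H hH => hH.2) (b₀ - b) ρ hρ
    have hbv : b + v ∈ zono X := by
      apply hball
      rw [Metric.mem_ball] at hvball ⊢
      have hdd : dist (b + v) b₀ = dist v (b₀ - b) := by
        rw [dist_eq_norm, dist_eq_norm]; congr 1; abel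
      rwa [hdd]
    have hhyp : hyperUnion X ⊆ ⋃ H ∈ ℱ, (H : Set (Amb ι)) := by
      rintro u ⟨H, hrat, hrk, hu⟩
      refine Set.mem_biUnion ⟨hrat, fun htop => ?_⟩ hu
      rw [htop, hspan] at hrk
      omega
    have hsing : singSet X ⊆ ⋃ H ∈ ℱ, (H : Set (Amb ι)) :=
      (sing_subset_hyper X hspan).trans hhyp
    set S : Set ℝ := {ε | ∃ H ∈ ℱ, x + ε • v ∈ H} with hS
    have hSfin : S.Finite := by
      have hSU : S = ⋃ H ∈ ℱ, {ε | x + ε • v ∈ H} := by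
        ext ε; simp [hS]
      rw [hSU]
      refine Set.Finite.biUnion hfinℱ (fun H hH => Set.Subsingleton.finite ?_)
      intro ε₁ h1 ε₂ h2
      by_contra hne
      apply hv H hH
      have hsub : (ε₁ - ε₂) • v ∈ H := by
        have hd := H.sub_mem h1 h2
        have he : (x + ε₁ • v) - (x + ε₂ • v) = (ε₁ - ε₂) • v := by
          rw [sub_smul]; abel
        rwa [he] at hd
      have hsm := H.smul_mem (ε₁ - ε₂)⁻¹ hsub
      rwa [smul_smul, inv_mul_cancel₀ (sub_ne_zero.mpr hne), one_smul] at hsm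
    obtain ⟨ε₀, hε₀pos, hε₀le, hε₀⟩ :
        ∃ ε₀ : ℝ, 0 < ε₀ ∧ ε₀ ≤ 1 ∧ ∀ ε : ℝ, 0 < ε → ε ≤ ε₀ → ε ∉ S := by
      set T := (hSfin.toFinset.filter (fun ε => 0 < ε)) with hT
      by_cases hTne : T.Nonempty
      · have hmpos : 0 < T.min' hTne := (Finset.mem_filter.mp (T.min'_mem hTne)).2
        refine ⟨min (T.min' hTne / 2) 1, by positivity, min_le_right _ _, ?_⟩
        intro ε hε hle hεS
        have hεT : ε ∈ T := Finset.mem_filter.mpr ⟨hSfin.mem_toFinset.mpr hεS, hε⟩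
        have h1 : T.min' hTne ≤ ε := T.min'_le _ hεT
        have h2 : ε ≤ T.min' hTne / 2 := hle.trans (min_le_left _ _)
        linarith
      · exact ⟨1, one_pos, le_rfl, fun ε hε _ hεS =>
          hTne ⟨ε, Finset.mem_filter.mpr ⟨hSfin.mem_toFinset.mpr hεS, hε⟩⟩⟩
    have havoid : ∀ ε : ℝ, 0 < ε → ε ≤ ε₀ → ∀ H ∈ ℱ, x + ε • v ∉ H :=
      fun ε h1 h2 H hH hmem => hε₀ ε h1 h2 ⟨H, hH, hmem⟩
    set seg : Set (Amb ι) := (fun ε : ℝ => x + ε • v) '' Set.Icc 0 ε₀ with hseg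
    have hsegconn : IsPreconnected seg :=
      (isPreconnected_Icc).image _
        ((continuous_const.add (continuous_id.smul continuous_const)).continuousOn)
    have hsegF : seg ⊆ F := by
      rintro _ ⟨ε, ⟨hε0, hε1⟩, rfl⟩
      rcases eq_or_lt_of_le hε0 with h | h
      · rw [← h]; simpa using hxF
      · intro hmem
        obtain ⟨Hs, hH1, hH2⟩ := Set.mem_iUnion₂.mp (hsing hmem)
        exact havoid ε h hε1 Hs hH1 hH2
    have hxseg : x ∈ seg := ⟨0, ⟨le_rfl, hε₀pos.le⟩, by simp⟩
    have hsegc : seg ⊆ connectedComponentIn F v₀ := by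
      rw [connectedComponentIn_eq hx]
      exact hsegconn.subset_connectedComponentIn hxseg hsegF
    have hxe : x + ε₀ • v ∈ connectedComponentIn F v₀ :=
      hsegc ⟨ε₀, ⟨hε₀pos.le, le_rfl⟩, rfl⟩
    set G : Set (Amb ι) := (spanOf X : Set (Amb ι)) \ hyperUnion X with hG
    have hxeG : x + ε₀ • v ∈ G := by
      constructor
      · rw [hspan]; trivial
      · intro hmem
        obtain ⟨Hs, hH1, hH2⟩ := Set.mem_iUnion₂.mp (hhyp hmem)
        exact havoid ε₀ hε₀pos le_rfl Hs hH1 hH2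
    have hGF : G ⊆ F := fun z hz hmem => hz.2 (sing_subset_hyper X hspan hmem)
    set τ' := connectedComponentIn G (x + ε₀ • v) with hτ'
    have htope : IsTope X τ' := ⟨_, hxeG, rfl⟩
    have hτ'c : τ' ⊆ connectedComponentIn F v₀ := by
      rw [connectedComponentIn_eq hxe]
      exact (isConnected_connectedComponentIn_iff.mpr hxeG).isPreconnected.subset_connectedComponentIn
        (mem_connectedComponentIn hxeG) ((connectedComponentIn_subset _ _).trans hGF)
    obtain ⟨i, hi⟩ := hall τ' htope hτ'c
    refine Set.mem_iUnion.mpr ⟨i, x + ε₀ • v, ?_, b + ε₀ • v, ?_, ?_⟩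
    · rw [← hi]; exact mem_connectedComponentIn hxeG
    · have hcvx : b + ε₀ • v = (1 - ε₀) • b + ε₀ • (b + v) := by
        rw [smul_add, ← add_assoc, ← add_smul, sub_add_cancel, one_smul]
      rw [hcvx]
      exact zono_convex X hb hbv (by linarith) hε₀pos.le (by ring)
    · abel
  · rintro p hp
    obtain ⟨i, hpi⟩ := Set.mem_iUnion.mp hp
    obtain ⟨x, hxi, b, hb, rfl⟩ := hpi
    exact ⟨x, (hτ i).2 hxi, b, hb, rfl⟩
end
end
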